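/- For every i with 1 ≤ i ≤ log2(d)+1 (d a power of 2), there exists a hypergraph G in class C with maximum degree at most 2d such that each full branch of T_G contains i bottom units U_1, ..., U_i with l(U_j) = j for j = 1, ..., i. -/

import Mathlib

/-- The finset of all boolean lists of length `k` (nodes on level `k` of the
complete infinite rooted binary tree). -/
def listsOfLen : ℕ → Finset (List Bool)
  | 0 => {[]}
  | k+1 => (listsOfLen k).image (· ++ [true]) ∪ (listsOfLen k).image (· ++ [false])

/-- The vertex set of the full branch (root-to-`l` path) ending at the node `l`. -/
def prefixesF (l : List Bool) : Finset (List Bool) :=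
  (Finset.range (l.length + 1)).image (fun i => l.take i)

/-- The vertex set of the level-descending path starting at node `p` and
ending at node `p ++ q`. -/
def pathFinset (p q : List Bool) : Finset (List Bool) :=
  (Finset.range (q.length + 1)).image (fun i => p ++ q.take i)

/-- `S` is (the node set of) a rooted binary tree: it contains the root, is
prefix-closed, and every node has either zero or two children. -/
def IsBinTree (S : Finset (List Bool)) : Prop :=
  [] ∈ S ∧ (∀ l ∈ S, ∀ p : List Bool, p <+: l → p ∈ S) ∧
    ∀ l ∈ S, ((l ++ [true]) ∈ S ↔ (l ++ [false]) ∈ S)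

/-- `l` is a leaf of the tree `S`. -/
def IsLeaf (S : Finset (List Bool)) (l : List Bool) : Prop :=
  l ∈ S ∧ (l ++ [true]) ∉ S ∧ (l ++ [false]) ∉ S

/-- The edge `e` is a level-descending path inside the tree `S`. -/
def InTree (S : Finset (List Bool)) (e : Finset (List Bool)) : Prop :=
  ∃ p q : List Bool, (p ++ q) ∈ S ∧ e = pathFinset p q

/-- Degree of vertex `v` in a hypergraph with hyperedge multiset `E`
(counted with multiplicity). -/
def mDegree (E : Multiset (Finset (List Bool))) (v : List Bool) : ℕ :=
  Multiset.countP (fun e => v ∈ e) E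

/-- The number (with multiplicity) of bottom hyperedges of size `L` of the full
branch ending at the leaf `l`: hyperedges contained in the branch and ending at `l`. -/
def bottomCount (E : Multiset (Finset (List Bool))) (l : List Bool) (L : ℕ) : ℕ :=
  Multiset.countP (fun e => l ∈ e ∧ e ⊆ prefixesF l ∧ e.card = L) E

/-- With `d = 2^m`, the full branch ending at leaf `l` contains bottom units of
power `k` whose multiset of lengths is `ls`: a unit of power `k` and length `L`
consists of `2^(m+1+k-L)` hyperedges of size `L` ending at `l`. -/
def HasBottomUnits (m k : ℕ) (E : Multiset (Finset (List Bool))) (l : List Bool)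
    (ls : Multiset ℕ) : Prop :=
  (∀ L ∈ ls, k ≤ L ∧ L ≤ m + 1 + k) ∧
  ∀ L : ℕ, ls.count L * 2 ^ (m + 1 + k - L) ≤ bottomCount E l L

lemma mem_listsOfLen {k : ℕ} {l : List Bool} : l ∈ listsOfLen k ↔ l.length = k := by
  induction k generalizing l with
  | zero => simp [listsOfLen, List.length_eq_zero_iff]
  | succ k ih =>
    simp only [listsOfLen, Finset.mem_union, Finset.mem_image, ih]
    constructor
    · rintro (⟨a, ha, rfl⟩ | ⟨a, ha, rfl⟩) <;> simp [ha]
    · intro hl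
      have hne : l ≠ [] := by rintro rfl; simp at hl
      have hdl : l.dropLast.length = k := by rw [List.length_dropLast, hl]; rfl
      have hsplit := List.dropLast_append_getLast hne
      cases hgl : l.getLast hne with
      | true => exact Or.inl ⟨l.dropLast, hdl, by rw [← hgl]; exact hsplit⟩
      | false => exact Or.inr ⟨l.dropLast, hdl, by rw [← hgl]; exact hsplit⟩

lemma card_listsOfLen_le (k : ℕ) : (listsOfLen k).card ≤ 2 ^ k := by
  induction k with
  | zero => simp [listsOfLen]
  | succ k ih =>
    show ((listsOfLen k).image (· ++ [true]) ∪ (listsOfLen k).image (· ++ [false])).card ≤ 2 ^ (k+1)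
    refine (Finset.card_union_le _ _).trans ?_
    have h1 := (Finset.card_image_le (s := listsOfLen k) (f := (· ++ [true]))).trans ih
    have h2 := (Finset.card_image_le (s := listsOfLen k) (f := (· ++ [false]))).trans ih
    calc _ ≤ 2^k + 2^k := Nat.add_le_add h1 h2
      _ = 2^(k+1) := by ring

lemma take_mem_prefixesF (l : List Bool) (t : ℕ) : l.take t ∈ prefixesF l := by
  simp only [prefixesF, Finset.mem_image, Finset.mem_range]
  rcases le_or_gt t l.length with h | h
  · exact ⟨t, by omega, rfl⟩
  · exact ⟨l.length, by omega, by rw [List.take_length, List.take_of_length_le (by omega)]⟩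

lemma mem_pathFinset {p q x : List Bool} :
    x ∈ pathFinset p q ↔ ∃ s, s ≤ q.length ∧ p ++ q.take s = x := by
  simp [pathFinset, Finset.mem_image, Finset.mem_range, Nat.lt_succ_iff]

lemma card_pathFinset (p q : List Bool) : (pathFinset p q).card = q.length + 1 := by
  rw [pathFinset, Finset.card_image_of_injOn, Finset.card_range]
  intro a ha b hb hab
  simp only [Finset.coe_range, Set.mem_Iio, Nat.lt_succ_iff] at ha hb
  have := congrArg List.length hab
  simp only [List.length_append, List.length_take] at this
  omega

def edgeAt (l : List Bool) (j : ℕ) : Finset (List Bool) :=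
  pathFinset (l.take (l.length - j)) (l.drop (l.length - j))

lemma mem_edgeAt {l : List Bool} {j : ℕ} {x : List Bool} (hx : x ∈ edgeAt l j) :
    ∃ t, l.length - j ≤ t ∧ x = l.take t := by
  obtain ⟨s, hs, hx⟩ := mem_pathFinset.1 hx
  exact ⟨l.length - j + s, by omega, by rw [List.take_add, hx]⟩

lemma self_mem_edgeAt (l : List Bool) (j : ℕ) : l ∈ edgeAt l j := by
  refine mem_pathFinset.2 ⟨(l.drop (l.length - j)).length, le_rfl, ?_⟩
  rw [List.take_length, List.take_append_drop]

lemma edgeAt_subset (l : List Bool) (j : ℕ) : edgeAt l j ⊆ prefixesF l := by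
  intro x hx
  obtain ⟨t, _, rfl⟩ := mem_edgeAt hx
  exact take_mem_prefixesF l t

lemma card_edgeAt {l : List Bool} {j : ℕ} (hj : j ≤ l.length) : (edgeAt l j).card = j + 1 := by
  rw [edgeAt, card_pathFinset, List.length_drop]
  omega

lemma countP_replicate' (p : Finset (List Bool) → Prop) [DecidablePred p]
    (n : ℕ) (a : Finset (List Bool)) :
    Multiset.countP p (Multiset.replicate n a) = if p a then n else 0 := by
  induction n with
  | zero => simp
  | succ n ih =>
    rw [Multiset.replicate_succ, Multiset.countP_cons, ih]
    split <;> omega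

lemma countP_bind' {α : Type} (p : Finset (List Bool) → Prop) [DecidablePred p]
    (s : Multiset α) (f : α → Multiset (Finset (List Bool))) :
    Multiset.countP p (s.bind f) = (s.map fun a => Multiset.countP p (f a)).sum := by
  induction s using Multiset.induction with
  | empty => simp
  | cons a s ih => simp [Multiset.cons_bind, Multiset.countP_add, ih]

lemma sum_range_two_pow (K : ℕ) : ∑ s ∈ Finset.range K, 2^s = 2^K - 1 := by
  induction K with
  | zero => simp
  | succ K ih =>
    rw [Finset.sum_range_succ, ih]
    have h1 : (1:ℕ) ≤ 2^K := Nat.one_le_two_pow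
    have h2 : 2^(K+1) = 2^K * 2 := pow_succ 2 K
    omega

lemma sum_pow_le (m n a : ℕ) (hnm : n ≤ m) :
    (∑ j ∈ (Finset.range (n+1)).filter (fun j => a ≤ j), 2^(m-j)) ≤ 2^(m-a+1) - 1 := by
  set T := (Finset.range (n+1)).filter (fun j => a ≤ j) with hT
  have hinj : ∀ x ∈ T, ∀ y ∈ T, m - x = m - y → x = y := by
    intro x hx y hy h
    simp only [hT, Finset.mem_filter, Finset.mem_range] at hx hy
    omega
  rw [← Finset.sum_image (f := fun s : ℕ => 2^s) (g := fun j => m - j) hinj]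
  refine le_trans (Finset.sum_le_sum_of_subset ?_) (le_of_eq (sum_range_two_pow _))
  intro s hs
  simp only [Finset.mem_image, hT, Finset.mem_filter, Finset.mem_range] at hs
  obtain ⟨j, ⟨hj, haj⟩, rfl⟩ := hs
  simp only [Finset.mem_range]
  omega

/-- For every `1 ≤ i ≤ m + 1` (`d = 2^m` a power of 2) there is a tree
hypergraph with maximum degree at most `2d` such that every full branch contains
`i` bottom units of lengths `1, 2, ..., i`. -/
theorem exists_tree_with_units (m i : ℕ) (hi : 1 ≤ i) (hi2 : i ≤ m + 1) :
    ∃ (S : Finset (List Bool)) (E : Multiset (Finset (List Bool))),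
      IsBinTree S ∧ (∀ e ∈ E, InTree S e) ∧
      (∀ v : List Bool, mDegree E v ≤ 2 * 2 ^ m) ∧
      (∀ l : List Bool, IsLeaf S l →
        HasBottomUnits m 0 E l ((Multiset.range i).map (· + 1))) := by
  obtain ⟨n, rfl⟩ : ∃ n, i = n + 1 := ⟨i - 1, by omega⟩
  have hnm : n ≤ m := by omega
  set S : Finset (List Bool) := (Finset.range (n+1)).biUnion listsOfLen with hS
  have hmemS : ∀ l : List Bool, l ∈ S ↔ l.length ≤ n := by
    intro l
    simp only [hS, Finset.mem_biUnion, Finset.mem_range, Nat.lt_succ_iff, mem_listsOfLen]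
    constructor
    · rintro ⟨k, hk, rfl⟩; exact hk
    · intro h; exact ⟨l.length, h, rfl⟩
  set Efam : List Bool → Multiset (Finset (List Bool)) :=
    fun l => (Multiset.range (n+1)).bind
      (fun j => Multiset.replicate (2^(m-j)) (edgeAt l j)) with hEfam
  set E : Multiset (Finset (List Bool)) := (listsOfLen n).val.bind Efam with hE
  refine ⟨S, E, ⟨(hmemS []).2 (by simp), ?_, ?_⟩, ?_, ?_, ?_⟩
  · -- prefix closed
    intro l hl p hp
    rw [hmemS] at hl ⊢
    exact le_trans hp.length_le hl
  · -- two children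
    intro l _
    simp [hmemS]
  · -- edges in tree
    intro e he
    simp only [hE, Multiset.mem_bind, Finset.mem_val, mem_listsOfLen, hEfam,
      Multiset.mem_range, Multiset.mem_replicate] at he
    obtain ⟨l, hl, j, hj, _, rfl⟩ := he
    exact ⟨l.take (l.length - j), l.drop (l.length - j),
      by rw [List.take_append_drop, hmemS]; omega, rfl⟩
  · -- degree bound
    intro v
    set t := v.length with ht
    set B := 2^(m-(n-t)+1) - 1 with hB
    have hdeg : mDegree E v
        = ((listsOfLen n).val.map (fun l => Multiset.countP (fun e => v ∈ e) (Efam l))).sum :=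
      countP_bind' _ _ _
    rw [← Finset.sum_eq_multiset_sum] at hdeg
    have hbound : ∀ l ∈ listsOfLen n,
        Multiset.countP (fun e => v ∈ e) (Efam l) ≤ if v <+: l then B else 0 := by
      intro l hl
      rw [mem_listsOfLen] at hl
      have h1 : Multiset.countP (fun e => v ∈ e) (Efam l)
          = ∑ j ∈ Finset.range (n+1), if v ∈ edgeAt l j then 2^(m-j) else 0 := by
        rw [hEfam, countP_bind', Finset.sum_eq_multiset_sum, Finset.range_val]
        congr 1
        exact Multiset.map_congr rfl (fun j _ => countP_replicate' _ _ _)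
      rw [h1]
      by_cases hpre : v <+: l
      · simp only [hpre, if_true]
        have h2 : ∀ j ∈ Finset.range (n+1),
            (if v ∈ edgeAt l j then 2^(m-j) else 0) ≤ if n - t ≤ j then 2^(m-j) else 0 := by
          intro j _
          split
          · rename_i hv
            obtain ⟨t', htt', hv'⟩ := mem_edgeAt hv
            have : v.length = min t' l.length := by rw [hv', List.length_take]
            rw [if_pos (by omega)]
          · exact Nat.zero_le _
        refine le_trans (Finset.sum_le_sum h2) ?_
        rw [← Finset.sum_filter]
        exact sum_pow_le m n (n - t) hnm
      · have h0 : ∀ j ∈ Finset.range (n+1),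
            (if v ∈ edgeAt l j then 2^(m-j) else 0) = 0 := by
          intro j _
          rw [if_neg]
          intro hv
          obtain ⟨t', _, rfl⟩ := mem_edgeAt hv
          exact hpre (List.take_prefix _ _)
        rw [Finset.sum_congr rfl h0]
        simp [hpre]
    have hcard : ((listsOfLen n).filter (fun l => v <+: l)).card ≤ 2^(n-t) := by
      refine le_trans (Finset.card_le_card_of_injOn (fun l => l.drop t)
        ?_ ?_ (t := listsOfLen (n - t))) (card_listsOfLen_le _)
      · intro l hl
        simp only [Finset.coe_filter, Set.mem_setOf_eq, Finset.mem_coe, Finset.mem_filter, mem_listsOfLen] at hl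
        simp only [Finset.mem_coe, mem_listsOfLen, List.length_drop, hl.1]
      · intro l1 h1 l2 h2 hdrop
        simp only [Finset.coe_filter, Set.mem_setOf_eq, mem_listsOfLen] at h1 h2
        have e1 : l1 = v ++ l1.drop t := by
          conv_lhs => rw [← List.take_append_drop t l1]
          rw [← List.prefix_iff_eq_take.1 h1.2]
        have e2 : l2 = v ++ l2.drop t := by
          conv_lhs => rw [← List.take_append_drop t l2]
          rw [← List.prefix_iff_eq_take.1 h2.2]
        rw [e1, e2]; exact congrArg (v ++ ·) hdrop
    calc mDegree E v ≤ ∑ l ∈ listsOfLen n, if v <+: l then B else 0 := by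
          rw [hdeg]; exact Finset.sum_le_sum hbound
      _ = ((listsOfLen n).filter (fun l => v <+: l)).card * B := by
          rw [← Finset.sum_filter, Finset.sum_const, smul_eq_mul]
      _ ≤ 2^(n-t) * B := Nat.mul_le_mul_right _ hcard
      _ ≤ 2 * 2^m := by
          have ha : n - t ≤ m := by omega
          have : 2^(n-t) * 2^(m-(n-t)+1) = 2 * 2^m := by
            rw [← pow_add]
            rw [show n - t + (m - (n-t) + 1) = m + 1 by omega]
            rw [pow_succ]; ring
          have hBle : B ≤ 2^(m-(n-t)+1) := by rw [hB]; exact Nat.sub_le _ _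
          calc 2^(n-t) * B ≤ 2^(n-t) * 2^(m-(n-t)+1) := Nat.mul_le_mul_left _ hBle
            _ = 2 * 2^m := this
  · -- bottom units
    intro l hleaf
    have hlenle : l.length ≤ n := (hmemS l).1 hleaf.1
    have hlen : l.length = n := by
      by_contra h
      exact hleaf.2.1 ((hmemS _).2
        (by rw [List.length_append, List.length_cons, List.length_nil]; omega))
    constructor
    · intro L hL
      simp only [Multiset.mem_map, Multiset.mem_range] at hL
      obtain ⟨j, hj, rfl⟩ := hL
      omega
    · intro L
      have hsub : ∀ j < n + 1,
          Multiset.replicate (2^(m-j)) (edgeAt l j) ≤ E := by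
        intro j hj
        refine le_trans (Multiset.le_bind (f := fun j => Multiset.replicate (2^(m-j)) (edgeAt l j)) _ (Multiset.mem_range.2 hj)) ?_
        rw [hE]
        exact Multiset.le_bind (f := Efam) _ (by rw [Finset.mem_val, mem_listsOfLen]; exact hlen)
      have hnodup : ((Multiset.range (n+1)).map (· + 1)).Nodup :=
        (Multiset.nodup_range _).map (fun a b h => by omega) 
      have hcnt : Multiset.count L ((Multiset.range (n+1)).map (· + 1)) ≤ 1 :=
        Multiset.nodup_iff_count_le_one.1 hnodup L
      by_cases hLr : 1 ≤ L ∧ L ≤ n + 1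
      · obtain ⟨j, rfl⟩ : ∃ j, L = j + 1 := ⟨L - 1, by omega⟩
        have hj : j < n + 1 := by omega
        have hbc : 2^(m-j) ≤ bottomCount E l (j+1) := by
          rw [bottomCount]
          refine le_trans ?_ (Multiset.countP_le_of_le _ (hsub j hj))
          rw [countP_replicate',
            if_pos ⟨self_mem_edgeAt l j, edgeAt_subset l j, card_edgeAt (by omega)⟩]
        calc Multiset.count (j+1) ((Multiset.range (n+1)).map (· + 1)) * 2^(m+1+0-(j+1))
            ≤ 1 * 2^(m+1+0-(j+1)) := Nat.mul_le_mul_right _ hcnt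
          _ = 2^(m-j) := by rw [one_mul]; congr 1; omega
          _ ≤ _ := hbc
      · have hc0 : Multiset.count L ((Multiset.range (n+1)).map (· + 1)) = 0 := by
          rw [Multiset.count_eq_zero]
          simp only [Multiset.mem_map, Multiset.mem_range]
          rintro ⟨a, ha, rfl⟩
          omega
        rw [hc0]
        simp
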